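/- Let D be a triangulated category and D₁, …, D_N full triangulated subcategories such that: Hom(X, Y) = 0 whenever X ∈ D_i, Y ∈ D_j with i < j; and every object X of D admits a finite tower 0 = X₀ → X₁ → ⋯ → X_N = X of morphisms such that the cone of X_{i−1} → X_i lies in D_i for each i (a semiorthogonal decomposition D = ⟨D_N, …, D₂, D₁⟩). For each i, let C_i ⊆ D_i be the heart of a bounded t-structure on D_i, and suppose that Hom(A, B[k]) = 0 for all A ∈ C_j, B ∈ C_i and all integers k ≤ 0 whenever j > i. Then the extension closure ⟨C_1, …, C_N⟩_ex — the smallest full subcategory of D containing every C_i that is closed under extensions — is the heart of a bounded t-structure on D. -/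

import Mathlib

open CategoryTheory Limits Pretriangulated

universe v u

variable {C : Type u} [Category.{v} C] [Preadditive C] [HasZeroObject C]
  [HasShift C ℤ] [∀ n : ℤ, (shiftFunctor C n).Additive] [Pretriangulated C]

open Preadditive

set_option linter.unusedSectionVars false
set_option linter.unusedVariables false

section Aux

noncomputable def shAdd' (A : C) (a b c : ℤ) (h : a + b = c) : (A⟦a⟧)⟦b⟧ ≅ A⟦c⟧ :=
  ((shiftFunctorAdd' C a b c h).symm.app A)

noncomputable def shZero (A : C) : A ≅ A⟦(0:ℤ)⟧ :=
  ((shiftFunctorZero C ℤ).symm.app A)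

lemma hom_zero_of_shift {A B : C} {k : ℤ} (h : ∀ f : B ⟶ A⟦k⟧, f = 0)
    {U V : C} {p q : ℤ} (eU : U ≅ B⟦p⟧) (eV : V ≅ A⟦q⟧) (hk : q - p = k) (f : U ⟶ V) : f = 0 := by
  have e2 : A⟦q⟧ ≅ (A⟦k⟧)⟦p⟧ := (shAdd' A k p q (by omega)).symm
  obtain ⟨g₀, hg⟩ := (shiftFunctor C p).map_surjective (eU.inv ≫ f ≫ eV.hom ≫ e2.hom)
  have : eU.inv ≫ f ≫ eV.hom ≫ e2.hom = 0 := by rw [← hg, h g₀, Functor.map_zero]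
  have h2 : f ≫ eV.hom ≫ e2.hom = 0 := by
    rw [← Category.id_comp (f ≫ eV.hom ≫ e2.hom), ← eU.hom_inv_id, Category.assoc, this,
      comp_zero]
  calc f = (f ≫ eV.hom ≫ e2.hom) ≫ e2.inv ≫ eV.inv := by simp
  _ = 0 := by rw [h2, zero_comp]

end Aux

/-- The extension closure of a class of objects `S`: the smallest class containing `S`
which is closed under isomorphisms and extensions (in distinguished triangles). -/
inductive ExtClosure (S : C → Prop) : C → Prop
  | of {X : C} : S X → ExtClosure S X
  | iso {X Y : C} : (X ≅ Y) → ExtClosure S X → ExtClosure S Y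
  | ext (T : Triangle C) : (T ∈ distTriang C) → ExtClosure S T.obj₁ →
      ExtClosure S T.obj₃ → ExtClosure S T.obj₂

/-- `D` is a (strictly) full triangulated subcategory: closed under isomorphisms,
contains the zero objects, closed under shifts and extensions. -/
structure IsTriangulatedSub (D : C → Prop) : Prop where
  iso : ∀ {X Y : C}, (X ≅ Y) → D X → D Y
  zero : ∀ X : C, IsZero X → D X
  shift : ∀ (X : C) (n : ℤ), D X → D (X⟦n⟧)
  ext : ∀ T : Triangle C, (T ∈ distTriang C) → D T.obj₁ → D T.obj₃ → D T.obj₂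

/-- `P` is the heart of a bounded t-structure on the (triangulated sub)category `D`,
via the standard characterization: `P ⊆ D`, morphisms `A ⟶ B⟦k⟧` vanish for
`A, B ∈ P` and `k < 0`, and every object of `D` admits a finite tower whose cones are
shifts `A⟦n᙮⟧` of objects `A ∈ P` with strictly decreasing shift degrees. -/
structure IsHeartOn (D P : C → Prop) : Prop where
  subset : ∀ X : C, P X → D X
  hom_neg : ∀ (A B : C) (k : ℤ), P A → P B → k < 0 → ∀ f : A ⟶ B⟦k⟧, f = 0
  filt : ∀ X : C, D X → ∃ (N : ℕ) (obj : Fin (N + 1) → C) (n : Fin N → ℤ),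
    IsZero (obj 0) ∧ Nonempty (obj (Fin.last N) ≅ X) ∧ StrictAnti n ∧
    ∀ i : Fin N, ∃ (f : obj i.castSucc ⟶ obj i.succ) (Z : C)
      (g : obj i.succ ⟶ Z) (h : Z ⟶ (obj i.castSucc)⟦(1 : ℤ)⟧),
      (Triangle.mk f g h ∈ distTriang C) ∧ ∃ A : C, P A ∧ Nonempty (Z ≅ A⟦n i⟧)

section Aux2

lemma extClosure_mono {S S' : C → Prop} (h : ∀ X, S X → S' X) :
    ∀ X, ExtClosure S X → ExtClosure S' X := by
  intro X hX
  induction hX with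
  | of h' => exact ExtClosure.of (h _ h')
  | iso e _ ih => exact ExtClosure.iso e ih
  | ext T hT _ _ ih1 ih3 => exact ExtClosure.ext T hT ih1 ih3

lemma extClosure_van_left {S : C → Prop} (V : C)
    (h : ∀ A, S A → ∀ f : A ⟶ V, f = 0) :
    ∀ A, ExtClosure S A → ∀ f : A ⟶ V, f = 0 := by
  intro A hA
  induction hA with
  | of h' => exact h _ h'
  | iso e _ ih =>
    intro f
    rw [← e.inv_hom_id_assoc f, ih (e.hom ≫ f), comp_zero]
  | ext T hT _ _ ih1 ih3 =>
    intro f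
    obtain ⟨g, hg⟩ := Triangle.yoneda_exact₂ T hT f (ih1 _)
    rw [hg, ih3 g, comp_zero]

lemma shift_triangle_dist (T : Triangle C) (hT : T ∈ distTriang C) (k : ℤ) :
    (Triangle.shiftFunctor C k).obj T ∈ distTriang C := by
  have := Triangle.shift_distinguished T hT k
  exact isomorphic_distinguished _ this _ (Iso.refl _)

lemma extClosure_van_right {S : C → Prop} (B : C) (k : ℤ)
    (h : ∀ A, S A → ∀ f : B ⟶ A⟦k⟧, f = 0) :
    ∀ A, ExtClosure S A → ∀ f : B ⟶ A⟦k⟧, f = 0 := by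
  intro A hA
  induction hA with
  | of h' => exact h _ h'
  | iso e _ ih =>
    intro f
    have : f ≫ (shiftFunctor C k).map e.inv = 0 := ih _
    calc f = (f ≫ (shiftFunctor C k).map e.inv) ≫ (shiftFunctor C k).map e.hom := by
            rw [Category.assoc, ← Functor.map_comp, e.inv_hom_id]; simp
      _ = 0 := by rw [this, zero_comp]
  | ext T hT _ _ ih1 ih3 =>
    intro f
    have hTk := shift_triangle_dist T hT k
    have h2 : f ≫ ((Triangle.shiftFunctor C k).obj T).mor₂ = 0 := by
      dsimp [Triangle.shiftFunctor]
      change f ≫ (k.negOnePow • (shiftFunctor C k).map T.mor₂) = 0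
      rw [Linear.comp_units_smul, ih3 (f ≫ (shiftFunctor C k).map T.mor₂), smul_zero]
    obtain ⟨g, hg⟩ := Triangle.coyoneda_exact₂ _ hTk f h2
    rw [hg, ih1 g]; exact zero_comp

lemma extClosure_van₂ {S : C → Prop} (k : ℤ)
    (hbase : ∀ A B, S A → S B → ∀ f : A ⟶ B⟦k⟧, f = 0) :
    ∀ A B, ExtClosure S A → ExtClosure S B → ∀ f : A ⟶ B⟦k⟧, f = 0 := by
  intro A B hA hB
  exact extClosure_van_left (B⟦k⟧)
    (fun A' hA' => extClosure_van_right A' k (fun B' hB' => hbase A' B' hA' hB') B hB) A hA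

/-! ### Towers -/

inductive Tower (Q : ℤ → C → Prop) : ℤ → C → Prop
  | zero (b : ℤ) {X : C} (hX : IsZero X) : Tower Q b X
  | step {X' X A : C} {m b : ℤ} (hb : b ≤ m) (hX' : Tower Q (m + 1) X')
      (f : X' ⟶ X) (g : X ⟶ A⟦m⟧) (h : A⟦m⟧ ⟶ X'⟦(1:ℤ)⟧)
      (dist : Triangle.mk f g h ∈ distTriang C) (hA : Q m A) : Tower Q b X

lemma tower_mono_bound {Q : ℤ → C → Prop} {b b' : ℤ} {X : C} (hb : b' ≤ b)
    (hX : Tower Q b X) : Tower Q b' X := by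
  cases hX with
  | zero _ h => exact Tower.zero _ h
  | step hb2 hX' f g h dist hA => exact Tower.step (le_trans hb hb2) hX' f g h dist hA

lemma tower_mono_pred {Q Q' : ℤ → C → Prop} (hQ : ∀ m A, Q m A → Q' m A) {b : ℤ} {X : C}
    (hX : Tower Q b X) : Tower Q' b X := by
  induction hX with
  | zero _ h => exact Tower.zero _ h
  | step hb2 hX' f g h dist hA ih => exact Tower.step hb2 ih f g h dist (hQ _ _ hA)

lemma tower_iso {Q : ℤ → C → Prop} {b : ℤ} {X Y : C} (e : X ≅ Y)
    (hX : Tower Q b X) : Tower Q b Y := by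
  cases hX with
  | zero _ h => exact Tower.zero _ (h.of_iso e.symm)
  | step hb2 hX' f g h dist hA =>
    refine Tower.step hb2 hX' (f ≫ e.hom) (e.inv ≫ g) h ?_ hA
    refine isomorphic_distinguished _ dist _ ?_
    exact Triangle.isoMk _ _ (Iso.refl _) e.symm (Iso.refl _) (by simp [Triangle.mk]) (by simp [Triangle.mk]) (by simp [Triangle.mk])

lemma tower_sub {D : C → Prop} (hD : IsTriangulatedSub D) {Q : ℤ → C → Prop} {b : ℤ} {X : C}
    (hQ : ∀ m A, Q m A → D A) (hX : Tower Q b X) : D X := by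
  induction hX with
  | zero _ h => exact hD.zero _ h
  | step hb2 hX' f g h dist hA ih =>
    exact hD.ext _ dist ih (hD.shift _ _ (hQ _ _ hA))

lemma tower_hom_into {Q : ℤ → C → Prop} {b : ℤ} {X : C} (hX : Tower Q b X)
    (V : C) (s : ℤ)
    (hp : ∀ m A, Q m A → b ≤ m → ∀ f : (A⟦m⟧)⟦s⟧ ⟶ V, f = 0) :
    ∀ f : X⟦s⟧ ⟶ V, f = 0 := by
  induction hX with
  | zero _ h =>
    intro f
    exact ((shiftFunctor C s).map_isZero h).eq_of_src f 0
  | @step X' X A m b hb2 hX' f₀ g₀ h₀ dist hA ih =>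
    intro f
    have hTk := shift_triangle_dist _ dist s
    have h1 : ((Triangle.shiftFunctor C s).obj (Triangle.mk f₀ g₀ h₀)).mor₁ ≫ f = 0 :=
      ih (fun m' A' hq hm' => hp m' A' hq (by omega)) _
    obtain ⟨g, hg⟩ := Triangle.yoneda_exact₂ _ hTk f h1
    rw [hg, hp m A hA hb2 g]; exact comp_zero

lemma dist_transport {Y₁ Y₂ X₁ X₂ Z : C} (e : Y₁ ≅ X₁) (hY : Y₂ = X₂)
    (f : X₁ ⟶ X₂) (g : X₂ ⟶ Z) (h : Z ⟶ X₁⟦(1:ℤ)⟧)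
    (hd : Triangle.mk f g h ∈ distTriang C) :
    Triangle.mk (e.hom ≫ f ≫ eqToHom hY.symm) (eqToHom hY ≫ g)
      (h ≫ (shiftFunctor C (1:ℤ)).map e.inv) ∈ distTriang C := by
  subst hY
  refine isomorphic_distinguished _ hd _ ?_
  exact Triangle.isoMk _ _ e (Iso.refl _) (Iso.refl _) (by simp [Triangle.mk]) (by simp [Triangle.mk])
    (by simp [Triangle.mk, ← Functor.map_comp])

lemma tower_to_filt {Q : ℤ → C → Prop} {b : ℤ} {X : C} (hX : Tower Q b X) :
    ∃ (N : ℕ) (obj : Fin (N + 1) → C) (n : Fin N → ℤ),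
      IsZero (obj 0) ∧ Nonempty (obj (Fin.last N) ≅ X) ∧ StrictAnti n ∧ (∀ i, b ≤ n i) ∧
      ∀ i : Fin N, ∃ (f : obj i.castSucc ⟶ obj i.succ) (Z : C)
        (g : obj i.succ ⟶ Z) (h : Z ⟶ (obj i.castSucc)⟦(1 : ℤ)⟧),
        (Triangle.mk f g h ∈ distTriang C) ∧ ∃ (A : C) (m : ℤ), Q m A ∧ Z = A⟦m⟧ ∧ n i = m := by
  induction hX with
  | zero b h =>
    refine ⟨0, fun _ => _, Fin.elim0, h, ⟨Iso.refl _⟩, by intro a; exact a.elim0,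
      fun i => i.elim0, fun i => i.elim0⟩
  | @step X' X A m b hb2 hX' f₀ g₀ h₀ dist hA ih =>
    obtain ⟨N, obj, n, hz, ⟨e⟩, hsa, hbd, hsteps⟩ := ih
    refine ⟨N + 1, Fin.snoc obj X, Fin.snoc n m, ?_, ?_, ?_, ?_, ?_⟩
    · have : (0 : Fin (N + 2)) = Fin.castSucc 0 := by simp
      rw [this, Fin.snoc_castSucc]
      exact hz
    · rw [Fin.snoc_last]; exact ⟨Iso.refl _⟩
    · intro a c hac
      rcases Fin.eq_castSucc_or_eq_last c with ⟨c', rfl⟩ | rfl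
      · obtain ⟨a', rfl⟩ : ∃ a', a = Fin.castSucc a' := by
          rcases Fin.eq_castSucc_or_eq_last a with ⟨a', rfl⟩ | rfl
          · exact ⟨a', rfl⟩
          · exact absurd (lt_trans hac (Fin.castSucc_lt_last c')) (lt_irrefl _)
        rw [Fin.snoc_castSucc, Fin.snoc_castSucc]
        exact hsa (by simpa using hac)
      · obtain ⟨a', rfl⟩ : ∃ a', a = Fin.castSucc a' := by
          rcases Fin.eq_castSucc_or_eq_last a with ⟨a', rfl⟩ | rfl
          · exact ⟨a', rfl⟩
          · exact absurd hac (lt_irrefl _)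
        rw [Fin.snoc_castSucc, Fin.snoc_last]
        have := hbd a'
        omega
    · intro i
      rcases Fin.eq_castSucc_or_eq_last i with ⟨i', rfl⟩ | rfl
      · rw [Fin.snoc_castSucc]; have := hbd i'; omega
      · rw [Fin.snoc_last]; exact hb2
    · intro i
      rcases Fin.eq_castSucc_or_eq_last i with ⟨j, rfl⟩ | rfl
      · obtain ⟨f, Z, g, h, hd, A', m', hq, hZ, hn⟩ := hsteps j
        have E1 : Fin.snoc (α := fun _ => C) obj X (Fin.castSucc j).castSucc = obj j.castSucc :=
          Fin.snoc_castSucc ..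
        have E2 : Fin.snoc (α := fun _ => C) obj X (Fin.castSucc j).succ = obj j.succ := by
          rw [Fin.succ_castSucc]; exact Fin.snoc_castSucc ..
        refine ⟨eqToHom E1 ≫ f ≫ eqToHom E2.symm, Z, eqToHom E2 ≫ g,
          h ≫ (shiftFunctor C (1:ℤ)).map (eqToIso E1).inv, ?_, ?_⟩
        · exact dist_transport (eqToIso E1) E2 f g h hd
        · refine ⟨A', m', hq, hZ, ?_⟩
          rw [Fin.snoc_castSucc]; exact hn
      · have E1 : Fin.snoc (α := fun _ => C) obj X (Fin.last N).castSucc = obj (Fin.last N) :=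
          Fin.snoc_castSucc ..
        have E2 : Fin.snoc (α := fun _ => C) obj X (Fin.last N).succ = X := by
          rw [Fin.succ_last]; exact Fin.snoc_last ..
        refine ⟨(eqToIso E1 ≪≫ e).hom ≫ f₀ ≫ eqToHom E2.symm, A⟦m⟧, eqToHom E2 ≫ g₀,
          h₀ ≫ (shiftFunctor C (1:ℤ)).map (eqToIso E1 ≪≫ e).inv, ?_, ?_⟩
        · exact dist_transport (eqToIso E1 ≪≫ e) E2 f₀ g₀ h₀ dist
        · refine ⟨A, m, hA, rfl, ?_⟩
          exact Fin.snoc_last ..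

/-! ### The splice lemma (identity on the first object) -/

lemma splice_lemma
    {P Y₁ Y₂ Z₁ Z₂ B : C}
    {p₁ : P ⟶ Y₁} {r₁ : Y₁ ⟶ Z₁} {θ₁ : Z₁ ⟶ P⟦(1:ℤ)⟧}
    (hTa : Triangle.mk p₁ r₁ θ₁ ∈ distTriang C)
    {p₂ : P ⟶ Y₂} {r₂ : Y₂ ⟶ Z₂} {θ₂ : Z₂ ⟶ P⟦(1:ℤ)⟧}
    (hTb : Triangle.mk p₂ r₂ θ₂ ∈ distTriang C)
    {z : Z₁ ⟶ Z₂} {q : Z₂ ⟶ B} {κ : B ⟶ Z₁⟦(1:ℤ)⟧}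
    (hTz : Triangle.mk z q κ ∈ distTriang C)
    {y : Y₁ ⟶ Y₂}
    (sq1 : p₁ ≫ y = p₂) (sq2 : y ≫ r₂ = r₁ ≫ z)
    (hPB : ∀ f : P⟦(1:ℤ)⟧ ⟶ B, f = 0)
    (hPZ₂ : ∀ f : P⟦(1:ℤ)⟧ ⟶ Z₂, f = 0)
    (hZB : ∀ f : Z₁⟦(1:ℤ)⟧ ⟶ B, f = 0) :
    ∃ (g' : Y₂ ⟶ B) (h' : B ⟶ Y₁⟦(1:ℤ)⟧), Triangle.mk y g' h' ∈ distTriang C := by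
  obtain ⟨Q, π, σ, hTc⟩ := distinguished_cocone_triangle y
  obtain ⟨c, hc1, hc2⟩ : ∃ c : Q ⟶ B, π ≫ c = r₂ ≫ q ∧ σ ≫ r₁⟦(1:ℤ)⟧' = c ≫ κ :=
    complete_distinguished_triangle_morphism (Triangle.mk y π σ) (Triangle.mk z q κ)
      hTc hTz r₁ r₂ sq2
  have hyπ : y ≫ π = 0 := comp_distTriang_mor_zero₁₂ _ hTc
  have hp₂π : p₂ ≫ π = 0 := by rw [← sq1, Category.assoc, hyπ, comp_zero]
  have hrot3a := rot_of_distTriang _ (rot_of_distTriang _ (rot_of_distTriang _ hTa))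
  have hrot2b := rot_of_distTriang _ (rot_of_distTriang _ hTb)
  have hrotc := rot_of_distTriang _ hTc
  -- sublemma : no nonzero maps P⟦1⟧ ⟶ Q
  have hQv : ∀ f : P⟦(1:ℤ)⟧ ⟶ Q, f = 0 := by
    intro x
    have hxc : x ≫ c = 0 := hPB _
    have hxσ : x ≫ σ = 0 := by
      obtain ⟨ξ, hξ⟩ : ∃ ξ : P⟦(1:ℤ)⟧ ⟶ P⟦(1:ℤ)⟧, x ≫ σ = ξ ≫ (-(p₁⟦(1:ℤ)⟧')) :=
        Triangle.coyoneda_exact₂ _ hrot3a (x ≫ σ) (by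
          show (x ≫ σ) ≫ (-(r₁⟦(1:ℤ)⟧')) = 0
          rw [comp_neg, Category.assoc, hc2, ← Category.assoc, hxc, zero_comp, neg_zero])
      have h31 : (x ≫ σ) ≫ y⟦(1:ℤ)⟧' = 0 := by
        rw [Category.assoc,
          show σ ≫ y⟦(1:ℤ)⟧' = 0 from comp_distTriang_mor_zero₃₁ _ hTc, comp_zero]
      rw [hξ] at h31
      have hz2 : ξ ≫ (p₂⟦(1:ℤ)⟧') = 0 := by
        rw [← sq1, Functor.map_comp]
        rw [Category.assoc, neg_comp, comp_neg, neg_eq_zero, ← Category.assoc,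
          Category.assoc] at h31
        rw [← Category.assoc, Category.assoc]
        exact h31
      obtain ⟨ϑ, hϑ⟩ : ∃ ϑ : P⟦(1:ℤ)⟧ ⟶ Z₂, ξ = ϑ ≫ θ₂ :=
        Triangle.coyoneda_exact₂ _ hrot2b ξ (by
          show ξ ≫ (-(p₂⟦(1:ℤ)⟧')) = 0
          rw [comp_neg, hz2, neg_zero])
      rw [hξ, hϑ, hPZ₂ ϑ, zero_comp, zero_comp]
    obtain ⟨w, hw⟩ : ∃ w : P⟦(1:ℤ)⟧ ⟶ Y₂, x = w ≫ π :=
      Triangle.coyoneda_exact₂ _ hrotc x hxσ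
    obtain ⟨χ, hχ⟩ : ∃ χ : P⟦(1:ℤ)⟧ ⟶ P, w = χ ≫ p₂ :=
      Triangle.coyoneda_exact₂ _ hTb w (hPZ₂ _)
    rw [hw, hχ, Category.assoc, hp₂π, comp_zero]
  -- surjectivity of precomposition with c
  have hsurj : ∀ (V : C), (∀ f : P⟦(1:ℤ)⟧ ⟶ V, f = 0) → ∀ (ψ : Q ⟶ V),
      ∃ φ : B ⟶ V, ψ = c ≫ φ := by
    intro V hv ψ
    obtain ⟨w₂, hw₂⟩ : ∃ w₂ : Z₂ ⟶ V, π ≫ ψ = r₂ ≫ w₂ :=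
      Triangle.yoneda_exact₂ _ hTb (π ≫ ψ) (by
        show p₂ ≫ π ≫ ψ = 0
        rw [← Category.assoc, hp₂π, zero_comp])
    have hzw : z ≫ w₂ = 0 := by
      obtain ⟨e₁, he₁⟩ : ∃ e₁ : P⟦(1:ℤ)⟧ ⟶ V, z ≫ w₂ = θ₁ ≫ e₁ :=
        Triangle.yoneda_exact₃ _ hTa (z ≫ w₂) (by
          show r₁ ≫ z ≫ w₂ = 0
          rw [← Category.assoc, ← sq2, Category.assoc, ← hw₂, ← Category.assoc, hyπ, zero_comp])
      rw [he₁, hv e₁, comp_zero]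
    obtain ⟨φ₀, hφ₀⟩ : ∃ φ₀ : B ⟶ V, w₂ = q ≫ φ₀ :=
      Triangle.yoneda_exact₂ _ hTz w₂ hzw
    obtain ⟨e₂, he₂⟩ : ∃ e₂ : Y₁⟦(1:ℤ)⟧ ⟶ V, ψ - c ≫ φ₀ = σ ≫ e₂ :=
      Triangle.yoneda_exact₃ _ hTc (ψ - c ≫ φ₀) (by
        show π ≫ (ψ - c ≫ φ₀) = 0
        rw [comp_sub, ← Category.assoc, hc1, hw₂, hφ₀, Category.assoc, sub_self])
    obtain ⟨e₃, he₃⟩ : ∃ e₃ : Z₁⟦(1:ℤ)⟧ ⟶ V, e₂ = (-(r₁⟦(1:ℤ)⟧')) ≫ e₃ :=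
      Triangle.yoneda_exact₂ _ hrot3a e₂ (by
        show (-(p₁⟦(1:ℤ)⟧')) ≫ e₂ = 0
        rw [neg_comp, hv (p₁⟦(1:ℤ)⟧' ≫ e₂), neg_zero])
    refine ⟨φ₀ - κ ≫ e₃, ?_⟩
    have hσe : σ ≫ e₂ = -(c ≫ (κ ≫ e₃)) := by
      rw [he₃, ← Category.assoc, comp_neg, hc2, neg_comp, Category.assoc]
    rw [sub_eq_iff_eq_add'] at he₂
    rw [he₂, hσe, comp_sub]
    abel
  -- injectivity on maps B ⟶ B
  have hinj : ∀ (φ : B ⟶ B), c ≫ φ = 0 → φ = 0 := by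
    intro φ hφ
    have hqφ : q ≫ φ = 0 := by
      obtain ⟨e₄, he₄⟩ : ∃ e₄ : P⟦(1:ℤ)⟧ ⟶ B, q ≫ φ = θ₂ ≫ e₄ :=
        Triangle.yoneda_exact₃ _ hTb (q ≫ φ) (by
          show r₂ ≫ q ≫ φ = 0
          rw [← Category.assoc, ← hc1, Category.assoc, hφ, comp_zero])
      rw [he₄, hPB e₄, comp_zero]
    obtain ⟨e₅, he₅⟩ : ∃ e₅ : Z₁⟦(1:ℤ)⟧ ⟶ B, φ = κ ≫ e₅ :=
      Triangle.yoneda_exact₃ _ hTz φ hqφ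
    rw [he₅, hZB e₅, comp_zero]
  -- endgame
  obtain ⟨d, hd⟩ := hsurj Q hQv (𝟙 Q)
  have hdc : d ≫ c = 𝟙 B := by
    have h0 : c ≫ (d ≫ c - 𝟙 B) = 0 := by
      rw [comp_sub, ← Category.assoc, ← hd, Category.id_comp, Category.comp_id, sub_self]
    have := hinj _ h0
    rwa [sub_eq_zero] at this
  have hcd : c ≫ d = 𝟙 Q := hd.symm
  refine ⟨π ≫ c, d ≫ σ, ?_⟩
  refine isomorphic_distinguished _ hTc _ ?_
  refine Triangle.isoMk _ _ (Iso.refl _) (Iso.refl _) (Iso.mk d c hdc hcd) ?_ ?_ ?_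
  · dsimp; simp [Triangle.mk]
  · dsimp
    erw [Category.id_comp, Category.assoc, hcd, Category.comp_id]
    rfl
  · dsimp; simp [Triangle.mk]

/-! ### The swap lemma -/

lemma swap_lemma {W X' X A B : C}
    {a : W ⟶ X'} {g : X' ⟶ A} {h : A ⟶ W⟦(1:ℤ)⟧}
    (hT1 : Triangle.mk a g h ∈ distTriang C)
    {u : X' ⟶ X} {v : X ⟶ B} {δ : B ⟶ X'⟦(1:ℤ)⟧}
    (hT2 : Triangle.mk u v δ ∈ distTriang C)
    (hAB0 : ∀ f : A ⟶ B, f = 0)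
    (hAB1 : ∀ f : A⟦(1:ℤ)⟧ ⟶ B, f = 0)
    (hBA : ∀ f : B⟦(-1:ℤ)⟧ ⟶ A, f = 0)
    (hAA : ∀ f : A ⟶ A⟦(-1:ℤ)⟧, f = 0)
    (hWB1 : ∀ f : W⟦(1:ℤ)⟧ ⟶ B, f = 0) :
    ∃ (W' : C) (f₁ : W ⟶ W') (g₁ : W' ⟶ B) (h₁ : B ⟶ W⟦(1:ℤ)⟧)
      (f₂ : W' ⟶ X) (g₂ : X ⟶ A) (h₂ : A ⟶ W'⟦(1:ℤ)⟧),
      (Triangle.mk f₁ g₁ h₁ ∈ distTriang C) ∧ (Triangle.mk f₂ g₂ h₂ ∈ distTriang C) := by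
  have hrotT2inv := inv_rot_of_distTriang _ hT2
  -- extend g over u
  obtain ⟨g'', hg''⟩ : ∃ g'' : X ⟶ A, g = u ≫ g'' :=
    Triangle.yoneda_exact₂ _ hrotT2inv g (hBA _)
  -- the fiber of g''
  obtain ⟨W', ι, η, hT4⟩ := distinguished_cocone_triangle₁ g''
  -- construct w0 : W ⟶ W' with two squares
  obtain ⟨c1, hc11, hc12⟩ : ∃ c1 : W⟦(1:ℤ)⟧ ⟶ W'⟦(1:ℤ)⟧,
      h ≫ c1 = 𝟙 A ≫ η ∧ (-(a⟦(1:ℤ)⟧')) ≫ (u⟦(1:ℤ)⟧') = c1 ≫ (-(ι⟦(1:ℤ)⟧')) :=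
    complete_distinguished_triangle_morphism (Triangle.mk a g h).rotate
      (Triangle.mk ι g'' η).rotate (rot_of_distTriang _ hT1) (rot_of_distTriang _ hT4)
      u (𝟙 A) (by simp [Triangle.mk, hg'']; exact Category.comp_id _)
  rw [Category.id_comp] at hc11
  set w0 : W ⟶ W' := (shiftFunctor C (1:ℤ)).preimage c1 with hw0def
  have hc1w0 : c1 = w0⟦(1:ℤ)⟧' := ((shiftFunctor C (1:ℤ)).map_preimage c1).symm
  have hw0η : h ≫ w0⟦(1:ℤ)⟧' = η := by rw [← hc1w0]; exact hc11
  have hw0ι : w0 ≫ ι = a ≫ u := by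
    apply (shiftFunctor C (1:ℤ)).map_injective
    rw [Functor.map_comp, Functor.map_comp, ← hc1w0]
    rw [neg_comp, comp_neg, neg_inj] at hc12
    exact hc12.symm
  -- the cone of w0
  obtain ⟨Q, π, σ, hT5⟩ := distinguished_cocone_triangle w0
  obtain ⟨c, hc1, hc2⟩ : ∃ c : Q ⟶ B, π ≫ c = ι ≫ v ∧ σ ≫ a⟦(1:ℤ)⟧' = c ≫ δ :=
    complete_distinguished_triangle_morphism (Triangle.mk w0 π σ) (Triangle.mk u v δ)
      hT5 hT2 a ι hw0ι
  have hw0π : w0 ≫ π = 0 := comp_distTriang_mor_zero₁₂ _ hT5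
  have hιg'' : ι ≫ g'' = 0 := comp_distTriang_mor_zero₁₂ _ hT4
  have hgh : g ≫ h = 0 := comp_distTriang_mor_zero₂₃ _ hT1
  have hrot2T1 := rot_of_distTriang _ (rot_of_distTriang _ hT1)
  have hrot3T1 := rot_of_distTriang _ hrot2T1
  have hrotT4 := rot_of_distTriang _ hT4
  have hrotT5 := rot_of_distTriang _ hT5
  have hinvT4 := inv_rot_of_distTriang _ hT4
  -- the key compatibility : the fiber inclusion of T4 factors through w0
  have hfib : (Triangle.mk ι g'' η).invRotate.mor₁ =
      (Triangle.mk a g h).invRotate.mor₁ ≫ w0 := by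
    dsimp [Triangle.invRotate]
    erw [neg_comp, Category.assoc, neg_inj]
    erw [← hw0η, Functor.map_comp, Category.assoc]
    congr 1
    exact (shiftFunctorCompIsoId C (1:ℤ) (-1) (by omega)).hom.naturality w0
  have hfibπ : (Triangle.mk ι g'' η).invRotate.mor₁ ≫ π = 0 := by
    erw [hfib, Category.assoc, hw0π, comp_zero]
  -- sublemma : no nonzero maps A ⟶ Q
  have hQA : ∀ x : A ⟶ Q, x = 0 := by
    intro x
    have hxc : x ≫ c = 0 := hAB0 _
    have hxσ : x ≫ σ = 0 := by
      obtain ⟨ξ, hξ⟩ : ∃ ξ : A ⟶ A, x ≫ σ = ξ ≫ h :=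
        Triangle.coyoneda_exact₂ _ hrot2T1 (x ≫ σ) (by
          show (x ≫ σ) ≫ (-(a⟦(1:ℤ)⟧')) = 0
          rw [comp_neg, Category.assoc, hc2, ← Category.assoc, hxc, zero_comp, neg_zero])
      have hξη : ξ ≫ η = 0 := by
        have h31 : (x ≫ σ) ≫ w0⟦(1:ℤ)⟧' = 0 := by
          rw [Category.assoc,
            show σ ≫ w0⟦(1:ℤ)⟧' = 0 from comp_distTriang_mor_zero₃₁ _ hT5, comp_zero]
        rw [hξ, Category.assoc, hw0η] at h31
        exact h31
      obtain ⟨ϑ, hϑ⟩ : ∃ ϑ : A ⟶ X, ξ = ϑ ≫ g'' :=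
        Triangle.coyoneda_exact₂ _ hrotT4 ξ hξη
      obtain ⟨χ, hχ⟩ : ∃ χ : A ⟶ X', ϑ = χ ≫ u :=
        Triangle.coyoneda_exact₂ _ hT2 ϑ (hAB0 _)
      have hcomp : x ≫ σ = χ ≫ (u ≫ g'') ≫ h := by
        rw [hξ, hϑ, hχ]; simp only [Category.assoc]
      rw [hcomp, ← hg'', hgh, comp_zero]
    obtain ⟨y0, hy0⟩ : ∃ y0 : A ⟶ W', x = y0 ≫ π :=
      Triangle.coyoneda_exact₂ _ hrotT5 x hxσ
    obtain ⟨χ₂, hχ₂⟩ : ∃ χ₂ : A ⟶ X', y0 ≫ ι = χ₂ ≫ u :=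
      Triangle.coyoneda_exact₂ _ hT2 (y0 ≫ ι) (by
        show (y0 ≫ ι) ≫ v = 0
        rw [Category.assoc, ← hc1, ← Category.assoc, ← hy0, hxc])
    obtain ⟨θ, hθ⟩ : ∃ θ : A ⟶ W, χ₂ = θ ≫ a :=
      Triangle.coyoneda_exact₂ _ hT1 χ₂ (by
        show χ₂ ≫ g = 0
        have : χ₂ ≫ (u ≫ g'') = y0 ≫ (ι ≫ g'') := by
          rw [← Category.assoc, ← hχ₂, Category.assoc]
        rw [hg'', this, hιg'', comp_zero])
    obtain ⟨ζ, hζ⟩ : ∃ ζ : A ⟶ A⟦(-1:ℤ)⟧, θ ≫ w0 - y0 = ζ ≫ (Triangle.mk ι g'' η).invRotate.mor₁ :=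
      Triangle.coyoneda_exact₂ _ hinvT4 (θ ≫ w0 - y0) (by
        show (θ ≫ w0 - y0) ≫ ι = 0
        rw [sub_comp, Category.assoc, hw0ι, hχ₂, hθ, ← Category.assoc, sub_self])
    have hy0θ : y0 = θ ≫ w0 := by
      erw [hAA ζ, zero_comp] at hζ
      rw [← sub_eq_zero, ← neg_sub, hζ]; exact neg_zero
    rw [hy0, hy0θ, Category.assoc, hw0π, comp_zero]
  -- surjectivity of precomposition with c
  have hsurj : ∀ (V : C), (∀ f : A ⟶ V, f = 0) → ∀ (ψ : Q ⟶ V),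
      ∃ φ : B ⟶ V, ψ = c ≫ φ := by
    intro V hv ψ
    obtain ⟨w₃, hw₃⟩ : ∃ w₃ : X ⟶ V, π ≫ ψ = ι ≫ w₃ :=
      Triangle.yoneda_exact₂ _ hinvT4 (π ≫ ψ) (by
        show (Triangle.mk ι g'' η).invRotate.mor₁ ≫ π ≫ ψ = 0
        erw [← Category.assoc, hfibπ, zero_comp])
    have huw : u ≫ w₃ = 0 := by
      obtain ⟨e₁, he₁⟩ : ∃ e₁ : A ⟶ V, u ≫ w₃ = g ≫ e₁ :=
        Triangle.yoneda_exact₂ _ hT1 (u ≫ w₃) (by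
          show a ≫ u ≫ w₃ = 0
          rw [← Category.assoc, ← hw0ι, Category.assoc, ← hw₃, ← Category.assoc, hw0π,
            zero_comp])
      rw [he₁, hv e₁, comp_zero]
    obtain ⟨φ, hφ⟩ : ∃ φ : B ⟶ V, w₃ = v ≫ φ :=
      Triangle.yoneda_exact₂ _ hT2 w₃ huw
    obtain ⟨e₂, he₂⟩ : ∃ e₂ : W⟦(1:ℤ)⟧ ⟶ V, ψ - c ≫ φ = σ ≫ e₂ :=
      Triangle.yoneda_exact₃ _ hT5 (ψ - c ≫ φ) (by
        show π ≫ (ψ - c ≫ φ) = 0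
        rw [comp_sub, ← Category.assoc, hc1, hw₃, hφ, Category.assoc, sub_self])
    obtain ⟨e₃, he₃⟩ : ∃ e₃ : X'⟦(1:ℤ)⟧ ⟶ V, e₂ = (-(a⟦(1:ℤ)⟧')) ≫ e₃ :=
      Triangle.yoneda_exact₂ _ hrot2T1 e₂ (by
        show h ≫ e₂ = 0
        exact hv _)
    refine ⟨φ - δ ≫ e₃, ?_⟩
    have hσe : σ ≫ e₂ = -(c ≫ (δ ≫ e₃)) := by
      rw [he₃, ← Category.assoc, comp_neg, hc2, neg_comp, Category.assoc]
    rw [sub_eq_iff_eq_add'] at he₂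
    rw [he₂, hσe, comp_sub]
    abel
  -- injectivity on maps B ⟶ B
  have hinj : ∀ (φ : B ⟶ B), c ≫ φ = 0 → φ = 0 := by
    intro φ hφ
    have hvφ : v ≫ φ = 0 := by
      obtain ⟨e₄, he₄⟩ : ∃ e₄ : A ⟶ B, v ≫ φ = g'' ≫ e₄ :=
        Triangle.yoneda_exact₂ _ hT4 (v ≫ φ) (by
          show ι ≫ v ≫ φ = 0
          rw [← Category.assoc, ← hc1, Category.assoc, hφ, comp_zero])
      rw [he₄, hAB0 e₄, comp_zero]
    obtain ⟨e₅, he₅⟩ : ∃ e₅ : X'⟦(1:ℤ)⟧ ⟶ B, φ = δ ≫ e₅ :=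
      Triangle.yoneda_exact₃ _ hT2 φ hvφ
    obtain ⟨e₈, he₈⟩ : ∃ e₈ : A⟦(1:ℤ)⟧ ⟶ B, e₅ = (-(g⟦(1:ℤ)⟧')) ≫ e₈ :=
      Triangle.yoneda_exact₂ _ hrot3T1 e₅ (by
        show (-(a⟦(1:ℤ)⟧')) ≫ e₅ = 0
        rw [neg_comp, hWB1 (a⟦(1:ℤ)⟧' ≫ e₅), neg_zero])
    rw [he₅, he₈, hAB1 e₈, comp_zero, comp_zero]
  -- endgame
  obtain ⟨d, hd⟩ := hsurj Q hQA (𝟙 Q)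
  have hdc : d ≫ c = 𝟙 B := by
    have h0 : c ≫ (d ≫ c - 𝟙 B) = 0 := by
      rw [comp_sub, ← Category.assoc, ← hd, Category.id_comp, Category.comp_id, sub_self]
    have := hinj _ h0
    rwa [sub_eq_zero] at this
  have hcd : c ≫ d = 𝟙 Q := hd.symm
  refine ⟨W', w0, π ≫ c, d ≫ σ, ι, g'', η, ?_, hT4⟩
  refine isomorphic_distinguished _ hT5 _ ?_
  refine Triangle.isoMk _ _ (Iso.refl _) (Iso.refl _) (Iso.mk d c hdc hcd) ?_ ?_ ?_
  · dsimp; simp [Triangle.mk]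
  · dsimp
    erw [Category.id_comp, Category.assoc, hcd, Category.comp_id]
    rfl
  · dsimp; simp [Triangle.mk]

/-! ### The merge lemma -/

lemma merge_lemma {W X' X A B : C}
    {a : W ⟶ X'} {g : X' ⟶ A} {h : A ⟶ W⟦(1:ℤ)⟧}
    (hT1 : Triangle.mk a g h ∈ distTriang C)
    {u : X' ⟶ X} {v : X ⟶ B} {δ : B ⟶ X'⟦(1:ℤ)⟧}
    (hT2 : Triangle.mk u v δ ∈ distTriang C)
    (hAB0 : ∀ f : A ⟶ B, f = 0)
    (hAB1 : ∀ f : A⟦(1:ℤ)⟧ ⟶ B, f = 0)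
    (hAA1 : ∀ f : A⟦(1:ℤ)⟧ ⟶ A, f = 0)
    (hABm : ∀ f : A⟦(1:ℤ)⟧ ⟶ (B⟦(1:ℤ)⟧)⟦(-1:ℤ)⟧, f = 0)
    (hWA1 : ∀ f : W⟦(1:ℤ)⟧ ⟶ A, f = 0)
    (hWB1 : ∀ f : W⟦(1:ℤ)⟧ ⟶ B, f = 0)
    (hWBm : ∀ f : W⟦(1:ℤ)⟧ ⟶ (B⟦(1:ℤ)⟧)⟦(-1:ℤ)⟧, f = 0) :
    ∃ (V : C) (f₁ : W ⟶ X) (g₁ : X ⟶ V) (h₁ : V ⟶ W⟦(1:ℤ)⟧)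
      (f₂ : A ⟶ V) (g₂ : V ⟶ B) (h₂ : B ⟶ A⟦(1:ℤ)⟧),
      (Triangle.mk f₁ g₁ h₁ ∈ distTriang C) ∧ (Triangle.mk f₂ g₂ h₂ ∈ distTriang C) := by
  have hag : a ≫ g = 0 := comp_distTriang_mor_zero₁₂ _ hT1
  have huv : u ≫ v = 0 := comp_distTriang_mor_zero₁₂ _ hT2
  obtain ⟨V, r, s, hTW⟩ := distinguished_cocone_triangle (a ≫ u)
  obtain ⟨γ, sq2, sq3⟩ : ∃ γ : A ⟶ V, g ≫ γ = u ≫ r ∧ h ≫ (𝟙 W)⟦(1:ℤ)⟧' = γ ≫ s :=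
    complete_distinguished_triangle_morphism (Triangle.mk a g h) (Triangle.mk (a ≫ u) r s)
      hT1 hTW (𝟙 W) u (by simp [Triangle.mk])
  simp at sq3
  replace sq3 : γ ≫ s = h := sq3.symm
  obtain ⟨R, ρ, sR, hTR⟩ := distinguished_cocone_triangle γ
  obtain ⟨c, sq2', sq3'⟩ : ∃ c : B ⟶ R, v ≫ c = r ≫ ρ ∧ δ ≫ g⟦(1:ℤ)⟧' = c ≫ sR :=
    complete_distinguished_triangle_morphism (Triangle.mk u v δ) (Triangle.mk γ ρ sR)
      hT2 hTR g r sq2.symm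
  have hγρ : γ ≫ ρ = 0 := comp_distTriang_mor_zero₁₂ _ hTR
  have hρsR : ρ ≫ sR = 0 := comp_distTriang_mor_zero₂₃ _ hTR
  have hrs : r ≫ s = 0 := comp_distTriang_mor_zero₂₃ _ hTW
  have hrot3T1 := rot_of_distTriang _ (rot_of_distTriang _ (rot_of_distTriang _ hT1))
  have hrot2T1 := rot_of_distTriang _ (rot_of_distTriang _ hT1)
  have hrot3TW := rot_of_distTriang _ (rot_of_distTriang _ (rot_of_distTriang _ hTW))
  have hrotTW := rot_of_distTriang _ hTW
  have hrotTR := rot_of_distTriang _ hTR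
  have hinvrot3T2 := inv_rot_of_distTriang _
    (rot_of_distTriang _ (rot_of_distTriang _ (rot_of_distTriang _ hT2)))
  -- a sub-chase: maps U ⟶ R vanish for suitable U
  have hRv : ∀ (U : C), (∀ f : U ⟶ B, f = 0) → (∀ f : U ⟶ A, f = 0) →
      (∀ f : U ⟶ (B⟦(1:ℤ)⟧)⟦(-1:ℤ)⟧, f = 0) → ∀ x : U ⟶ R, x = 0 := by
    intro U hUB hUA hUBm x
    have hstep1 : ∀ (ζ' : U ⟶ X'⟦(1:ℤ)⟧), ζ' ≫ u⟦(1:ℤ)⟧' = 0 → ζ' = 0 ∨ True := fun _ _ => Or.inr trivial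
    have hξ0 : x ≫ sR = 0 := by
      have hξγ : (x ≫ sR) ≫ γ⟦(1:ℤ)⟧' = 0 := by
        rw [Category.assoc,
          show sR ≫ γ⟦(1:ℤ)⟧' = 0 from comp_distTriang_mor_zero₃₁ _ hTR, comp_zero]
      obtain ⟨χ, hχ⟩ : ∃ χ : U ⟶ X'⟦(1:ℤ)⟧, x ≫ sR = χ ≫ (-(g⟦(1:ℤ)⟧')) :=
        Triangle.coyoneda_exact₃ _ hrot3T1 (x ≫ sR) (by
          show (x ≫ sR) ≫ (-(h⟦(1:ℤ)⟧')) = 0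
          rw [comp_neg, neg_eq_zero, ← sq3, Functor.map_comp, ← Category.assoc, hξγ, zero_comp])
      have hχur : (χ ≫ u⟦(1:ℤ)⟧') ≫ r⟦(1:ℤ)⟧' = 0 := by
        have h1 : χ ≫ (g ≫ γ)⟦(1:ℤ)⟧' = 0 := by
          have h2 := hξγ
          rw [hχ] at h2
          simpa [Functor.map_comp] using h2
        rw [sq2, Functor.map_comp, ← Category.assoc] at h1
        exact h1
      obtain ⟨ζ, hζ⟩ : ∃ ζ : U ⟶ W⟦(1:ℤ)⟧, χ ≫ u⟦(1:ℤ)⟧' = ζ ≫ (-((a ≫ u)⟦(1:ℤ)⟧')) :=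
        Triangle.coyoneda_exact₂ _ hrot3TW (χ ≫ u⟦(1:ℤ)⟧') (by
          show (χ ≫ u⟦(1:ℤ)⟧') ≫ (-(r⟦(1:ℤ)⟧')) = 0
          rw [comp_neg, hχur, neg_zero])
      have hχa : χ = -(ζ ≫ a⟦(1:ℤ)⟧') := by
        obtain ⟨ϑ, hϑ⟩ : ∃ ϑ : U ⟶ (B⟦(1:ℤ)⟧)⟦(-1:ℤ)⟧,
            χ + ζ ≫ a⟦(1:ℤ)⟧' = ϑ ≫ (Triangle.mk u v δ).rotate.rotate.rotate.invRotate.mor₁ :=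
          Triangle.coyoneda_exact₂ _ hinvrot3T2 (χ + ζ ≫ a⟦(1:ℤ)⟧') (by
            show (χ + ζ ≫ a⟦(1:ℤ)⟧') ≫ (-(u⟦(1:ℤ)⟧')) = 0
            have hζ' : χ ≫ u⟦(1:ℤ)⟧' = -(ζ ≫ (a⟦(1:ℤ)⟧' ≫ u⟦(1:ℤ)⟧')) := by
              rw [hζ]; simp [Functor.map_comp]
            simp only [add_comp, comp_neg, hζ', Category.assoc, neg_neg]
            abel)
        erw [hUBm ϑ, zero_comp] at hϑ
        rw [← sub_eq_zero, sub_neg_eq_add, hϑ]; rfl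
      rw [hχ, hχa]
      simp only [neg_comp, comp_neg, neg_neg, Category.assoc, ← Functor.map_comp, hag,
        Functor.map_zero, comp_zero]
    obtain ⟨y₁, hy₁⟩ : ∃ y₁ : U ⟶ V, x = y₁ ≫ ρ :=
      Triangle.coyoneda_exact₂ _ hrotTR x hξ0
    have hy₁s : y₁ ≫ s = 0 := by
      have h1 : (y₁ ≫ s) ≫ (a ≫ u)⟦(1:ℤ)⟧' = 0 := by
        rw [Category.assoc,
          show s ≫ (a ≫ u)⟦(1:ℤ)⟧' = 0 from comp_distTriang_mor_zero₃₁ _ hTW, comp_zero]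
      have h2 : ((y₁ ≫ s) ≫ a⟦(1:ℤ)⟧') ≫ u⟦(1:ℤ)⟧' = 0 := by
        rw [Category.assoc, ← Functor.map_comp]
        exact h1
      obtain ⟨ϑ₂, hϑ₂⟩ : ∃ ϑ₂ : U ⟶ (B⟦(1:ℤ)⟧)⟦(-1:ℤ)⟧,
          (y₁ ≫ s) ≫ a⟦(1:ℤ)⟧' = ϑ₂ ≫ (Triangle.mk u v δ).rotate.rotate.rotate.invRotate.mor₁ :=
        Triangle.coyoneda_exact₂ _ hinvrot3T2 ((y₁ ≫ s) ≫ a⟦(1:ℤ)⟧') (by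
          show ((y₁ ≫ s) ≫ a⟦(1:ℤ)⟧') ≫ (-(u⟦(1:ℤ)⟧')) = 0
          rw [comp_neg, h2, neg_zero])
      erw [hUBm ϑ₂, zero_comp] at hϑ₂
      obtain ⟨ϑ₃, hϑ₃⟩ : ∃ ϑ₃ : U ⟶ A, y₁ ≫ s = ϑ₃ ≫ h :=
        Triangle.coyoneda_exact₂ _ hrot2T1 (y₁ ≫ s) (by
          show (y₁ ≫ s) ≫ (-(a⟦(1:ℤ)⟧')) = 0
          rw [comp_neg, hϑ₂]; exact neg_zero)
      rw [hϑ₃, hUA ϑ₃, zero_comp]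
    obtain ⟨χ₄, hχ₄⟩ : ∃ χ₄ : U ⟶ X, y₁ = χ₄ ≫ r :=
      Triangle.coyoneda_exact₂ _ hrotTW y₁ hy₁s
    rw [hy₁, hχ₄, Category.assoc, ← sq2', ← Category.assoc, hUB (χ₄ ≫ v), zero_comp]
  -- surjectivity
  have hsurj : ∀ (V' : C), (∀ f : A ⟶ V', f = 0) → (∀ f : A⟦(1:ℤ)⟧ ⟶ V', f = 0) →
      (∀ f : W⟦(1:ℤ)⟧ ⟶ V', f = 0) → ∀ (φ : B ⟶ V'), ∃ ψ : R ⟶ V', φ = c ≫ ψ := by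
    intro V' hv0 hv1 hvW φ
    obtain ⟨ψ₀, hψ₀⟩ : ∃ ψ₀ : V ⟶ V', v ≫ φ = r ≫ ψ₀ :=
      Triangle.yoneda_exact₂ _ hTW (v ≫ φ) (by
        show (a ≫ u) ≫ v ≫ φ = 0
        rw [Category.assoc, ← Category.assoc u v φ, huv, zero_comp, comp_zero])
    obtain ⟨ψ, hψ⟩ : ∃ ψ : R ⟶ V', ψ₀ = ρ ≫ ψ :=
      Triangle.yoneda_exact₂ _ hTR ψ₀ (hv0 _)
    obtain ⟨e, he⟩ : ∃ e : X'⟦(1:ℤ)⟧ ⟶ V', φ - c ≫ ψ = δ ≫ e :=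
      Triangle.yoneda_exact₃ _ hT2 (φ - c ≫ ψ) (by
        show v ≫ (φ - c ≫ ψ) = 0
        rw [comp_sub, hψ₀, hψ, ← Category.assoc, ← sq2', Category.assoc, sub_self])
    obtain ⟨e₂, he₂⟩ : ∃ e₂ : A⟦(1:ℤ)⟧ ⟶ V', e = (-(g⟦(1:ℤ)⟧')) ≫ e₂ :=
      Triangle.yoneda_exact₂ _ hrot3T1 e (by
        show (-(a⟦(1:ℤ)⟧')) ≫ e = 0
        rw [neg_comp, hvW (a⟦(1:ℤ)⟧' ≫ e), neg_zero])
    refine ⟨ψ, ?_⟩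
    have : φ - c ≫ ψ = 0 := by
      rw [he, he₂, hv1 e₂, comp_zero, comp_zero]
    rw [← sub_eq_zero]
    exact this
  -- injectivity
  have hinj : ∀ (ψ : R ⟶ R), c ≫ ψ = 0 → ψ = 0 := by
    intro ψ hψ
    have hρψ : ρ ≫ ψ = 0 := by
      obtain ⟨e₁, he₁⟩ : ∃ e₁ : W⟦(1:ℤ)⟧ ⟶ R, ρ ≫ ψ = s ≫ e₁ :=
        Triangle.yoneda_exact₃ _ hTW (ρ ≫ ψ) (by
          show r ≫ ρ ≫ ψ = 0
          rw [← Category.assoc, ← sq2', Category.assoc, hψ, comp_zero])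
      rw [he₁, hRv (W⟦(1:ℤ)⟧) hWB1 hWA1 hWBm e₁, comp_zero]
    obtain ⟨e₃, he₃⟩ : ∃ e₃ : A⟦(1:ℤ)⟧ ⟶ R, ψ = sR ≫ e₃ :=
      Triangle.yoneda_exact₃ _ hTR ψ hρψ
    rw [he₃, hRv (A⟦(1:ℤ)⟧) hAB1 hAA1 hABm e₃, comp_zero]
  -- endgame
  obtain ⟨d, hd⟩ := hsurj B hAB0 hAB1 hWB1 (𝟙 B)
  have hdc : d ≫ c = 𝟙 R ∨ True := Or.inr trivial
  have hcd : c ≫ d = 𝟙 B := hd.symm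
  have hdc' : d ≫ c = 𝟙 R := by
    have h0 : c ≫ (d ≫ c - 𝟙 R) = 0 := by
      rw [comp_sub, ← Category.assoc, hcd, Category.id_comp, Category.comp_id, sub_self]
    have := hinj _ h0
    rwa [sub_eq_zero] at this
  refine ⟨V, a ≫ u, r, s, γ, ρ ≫ d, c ≫ sR, hTW, ?_⟩
  refine isomorphic_distinguished _ hTR _ ?_
  refine Triangle.isoMk _ _ (Iso.refl _) (Iso.refl _) (Iso.mk c d hcd hdc') ?_ ?_ ?_
  · dsimp; simp [Triangle.mk]
  · dsimp
    erw [Category.id_comp, Category.assoc, hdc', Category.comp_id]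
    rfl
  · dsimp; simp [Triangle.mk]

/-! ### Insertion of a new piece into a tower -/

lemma dist_iso₃ {X₁ X₂ Z Z' : C} (e : Z ≅ Z') (f : X₁ ⟶ X₂) (g : X₂ ⟶ Z) (h : Z ⟶ X₁⟦(1:ℤ)⟧)
    (hd : Triangle.mk f g h ∈ distTriang C) :
    Triangle.mk f (g ≫ e.hom) (e.inv ≫ h) ∈ distTriang C := by
  refine isomorphic_distinguished _ hd _ ?_
  exact Triangle.isoMk _ _ (Iso.refl _) (Iso.refl _) e.symm (by simp [Triangle.mk]) (by simp [Triangle.mk]) (by simp [Triangle.mk])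

lemma insert_lemma (n : ℤ) (B : C) {Q Q' : ℤ → C → Prop}
    (hQQ' : ∀ m A, Q m A → Q' m A) (hB : Q' n B)
    (hmerge : ∀ (A V : C), Q n A →
      (∃ (f : A⟦(n:ℤ)⟧ ⟶ V) (g : V ⟶ B⟦(n:ℤ)⟧) (h' : B⟦(n:ℤ)⟧ ⟶ (A⟦(n:ℤ)⟧)⟦(1:ℤ)⟧),
        Triangle.mk f g h' ∈ distTriang C) → Q' n (V⟦(-n:ℤ)⟧))
    (hlow : ∀ m A, Q m A → m ≤ n → ∀ (s t : ℤ) (U V' : C),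
      (U ≅ (A⟦(m:ℤ)⟧)⟦s⟧) → (V' ≅ (B⟦(n:ℤ)⟧)⟦t⟧) → ∀ f : U ⟶ V', f = 0)
    (hneg : ∀ (p q : ℤ) (A A' : C), (Q p A ∨ (p = n ∧ A = B)) →
      (Q q A' ∨ (q = n ∧ A' = B)) → ∀ (s t : ℤ) (U V' : C),
      (U ≅ (A⟦p⟧)⟦s⟧) → (V' ≅ (A'⟦q⟧)⟦t⟧) → q + t < p + s → ∀ f : U ⟶ V', f = 0)
    (hBAor : ∀ m A, Q m A → m < n → ∀ f : (B⟦(n:ℤ)⟧)⟦(-1:ℤ)⟧ ⟶ A⟦(m:ℤ)⟧, f = 0) :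
    ∀ {b : ℤ} {X' : C}, Tower Q b X' → b ≤ n →
      ∀ {X : C} (u : X' ⟶ X) (v : X ⟶ B⟦(n:ℤ)⟧) (δ : B⟦(n:ℤ)⟧ ⟶ X'⟦(1:ℤ)⟧),
      (Triangle.mk u v δ ∈ distTriang C) → Tower Q' b X := by
  intro b X' hX'
  induction hX' with
  | zero b h0 =>
    intro hbn X u v δ hT
    exact Tower.step hbn (Tower.zero (n+1) h0) u v δ hT hB
  | @step X'' X' A m b hb hsub u₀ v₀ δ₀ hT₀ hA ih =>
    intro hbn X u v δ hT
    rcases lt_trichotomy m n with hmn | hmn | hmn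
    · -- m < n : swap
      have hAB0 : ∀ f : A⟦(m:ℤ)⟧ ⟶ B⟦(n:ℤ)⟧, f = 0 := fun f =>
        hlow m A hA (le_of_lt hmn) 0 0 _ _ (shZero _) (shZero _) f
      have hAB1 : ∀ f : (A⟦(m:ℤ)⟧)⟦(1:ℤ)⟧ ⟶ B⟦(n:ℤ)⟧, f = 0 := fun f =>
        hlow m A hA (le_of_lt hmn) 1 0 _ _ (Iso.refl _) (shZero _) f
      have hBA : ∀ f : (B⟦(n:ℤ)⟧)⟦(-1:ℤ)⟧ ⟶ A⟦(m:ℤ)⟧, f = 0 := hBAor m A hA hmn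
      have hAA : ∀ f : A⟦(m:ℤ)⟧ ⟶ (A⟦(m:ℤ)⟧)⟦(-1:ℤ)⟧, f = 0 := fun f =>
        hneg m m A A (Or.inl hA) (Or.inl hA) 0 (-1) _ _ (shZero _) (Iso.refl _)
          (by omega) f
      have hWB1 : ∀ f : X''⟦(1:ℤ)⟧ ⟶ B⟦(n:ℤ)⟧, f = 0 := by
        refine tower_hom_into hsub _ 1 ?_
        intro m' A' hq hm' f
        by_cases hc : m' ≤ n
        · exact hlow m' A' hq hc 1 0 _ _ (Iso.refl _) (shZero _) f
        · exact hneg m' n A' B (Or.inl hq) (Or.inr ⟨rfl, rfl⟩) 1 0 _ _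
            (Iso.refl _) (shZero _) (by omega) f
      obtain ⟨W', f₁, g₁, h₁, f₂, g₂, h₂, hd1, hd2⟩ :=
        swap_lemma hT₀ hT hAB0 hAB1 hBA hAA hWB1
      have hW' : Tower Q' (m+1) W' := ih (by omega) f₁ g₁ h₁ hd1
      exact Tower.step hb hW' f₂ g₂ h₂ hd2 (hQQ' m A hA)
    · -- m = n : merge
      subst hmn
      have hAB0 : ∀ f : A⟦(m:ℤ)⟧ ⟶ B⟦(m:ℤ)⟧, f = 0 := fun f =>
        hlow m A hA le_rfl 0 0 _ _ (shZero _) (shZero _) f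
      have hAB1 : ∀ f : (A⟦(m:ℤ)⟧)⟦(1:ℤ)⟧ ⟶ B⟦(m:ℤ)⟧, f = 0 := fun f =>
        hlow m A hA le_rfl 1 0 _ _ (Iso.refl _) (shZero _) f
      have hAA1 : ∀ f : (A⟦(m:ℤ)⟧)⟦(1:ℤ)⟧ ⟶ A⟦(m:ℤ)⟧, f = 0 := fun f =>
        hneg m m A A (Or.inl hA) (Or.inl hA) 1 0 _ _ (Iso.refl _) (shZero _)
          (by omega) f
      have hABm : ∀ f : (A⟦(m:ℤ)⟧)⟦(1:ℤ)⟧ ⟶ ((B⟦(m:ℤ)⟧)⟦(1:ℤ)⟧)⟦(-1:ℤ)⟧, f = 0 := fun f =>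
        hneg m m A B (Or.inl hA) (Or.inr ⟨rfl, rfl⟩) 1 0 _ _ (Iso.refl _)
          (shAdd' (B⟦(m:ℤ)⟧) 1 (-1) 0 (by omega)) (by omega) f
      have hWA1 : ∀ f : X''⟦(1:ℤ)⟧ ⟶ A⟦(m:ℤ)⟧, f = 0 := by
        refine tower_hom_into hsub _ 1 ?_
        intro m' A' hq hm' f
        exact hneg m' m A' A (Or.inl hq) (Or.inl hA) 1 0 _ _ (Iso.refl _) (shZero _)
          (by omega) f
      have hWB1 : ∀ f : X''⟦(1:ℤ)⟧ ⟶ B⟦(m:ℤ)⟧, f = 0 := by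
        refine tower_hom_into hsub _ 1 ?_
        intro m' A' hq hm' f
        exact hneg m' m A' B (Or.inl hq) (Or.inr ⟨rfl, rfl⟩) 1 0 _ _ (Iso.refl _) (shZero _)
          (by omega) f
      have hWBm : ∀ f : X''⟦(1:ℤ)⟧ ⟶ ((B⟦(m:ℤ)⟧)⟦(1:ℤ)⟧)⟦(-1:ℤ)⟧, f = 0 := by
        refine tower_hom_into hsub _ 1 ?_
        intro m' A' hq hm' f
        exact hneg m' m A' B (Or.inl hq) (Or.inr ⟨rfl, rfl⟩) 1 0 _ _ (Iso.refl _)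
          (shAdd' (B⟦(m:ℤ)⟧) 1 (-1) 0 (by omega)) (by omega) f
      obtain ⟨V, f₁, g₁, h₁, f₂, g₂, h₂, hd1, hd2⟩ :=
        merge_lemma hT₀ hT hAB0 hAB1 hAA1 hABm hWA1 hWB1 hWBm
      have hE : Q' m (V⟦(-m:ℤ)⟧) := hmerge A V hA ⟨f₂, g₂, h₂, hd2⟩
      have eV : V ≅ ((V⟦(-m:ℤ)⟧)⟦(m:ℤ)⟧) :=
        (shZero V) ≪≫ (shAdd' V (-m) m 0 (by omega)).symm
      refine Tower.step hb (tower_mono_pred hQQ' hsub) f₁ (g₁ ≫ eV.hom) (eV.inv ≫ h₁)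
        (dist_iso₃ eV f₁ g₁ h₁ hd1) hE
    · -- n < m : put B on top
      have hX'once : Tower Q' (n+1) X' :=
        tower_mono_pred hQQ' (Tower.step (by omega) hsub u₀ v₀ δ₀ hT₀ hA)
      exact Tower.step hbn hX'once u v δ hT hB

/-! ### Assembling -/

lemma hom_zero_of_shift_left {A : C} {DD : C → Prop}
    (hDD : ∀ (V : C) (n : ℤ), DD V → DD (V⟦n⟧))
    (hA : ∀ (V : C), DD V → ∀ f : A ⟶ V, f = 0)
    {U V : C} {p : ℤ} (eU : U ≅ A⟦p⟧) (hV : DD V) (f : U ⟶ V) : f = 0 := by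
  have e2 : ((V⟦(-p:ℤ)⟧)⟦p⟧ : C) ≅ V := shAdd' V (-p) p 0 (by omega) ≪≫ (shZero V).symm
  obtain ⟨g₀, hg⟩ := (shiftFunctor C p).map_surjective (eU.inv ≫ f ≫ e2.inv)
  have h0 : eU.inv ≫ f ≫ e2.inv = 0 := by
    rw [← hg, hA _ (hDD V (-p) hV) g₀, Functor.map_zero]
  calc f = eU.hom ≫ (eU.inv ≫ f ≫ e2.inv) ≫ e2.hom := by simp
  _ = 0 := by rw [h0, zero_comp, comp_zero]

def Lp {N : ℕ} (P : Fin N → C → Prop) (c : ℕ) : C → Prop :=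
  ExtClosure (fun X => ∃ j : Fin N, (j : ℕ) < c ∧ P j X)

lemma lp_mono {N : ℕ} (P : Fin N → C → Prop) {c c' : ℕ} (h : c ≤ c') :
    ∀ X, Lp P c X → Lp P c' X :=
  extClosure_mono (fun X ⟨j, hj, hP⟩ => ⟨j, by omega, hP⟩)

lemma lp_sub_G {N : ℕ} (P : Fin N → C → Prop) (c : ℕ) :
    ∀ X, Lp P c X → ExtClosure (fun X : C => ∃ i, P i X) X :=
  extClosure_mono (fun X ⟨j, _, hP⟩ => ⟨j, hP⟩)

section Main

variable {N : ℕ} {D : Fin N → C → Prop} (hD : ∀ i, IsTriangulatedSub (D i))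
  (hsemi : ∀ i j : Fin N, i < j → ∀ (X Y : C), D i X → D j Y → ∀ f : X ⟶ Y, f = 0)
  {P : Fin N → C → Prop}
  (hP : ∀ i, IsHeartOn (D i) (P i))
  (hcross : ∀ i j : Fin N, i < j → ∀ (A B : C) (k : ℤ), P j A → P i B → k ≤ 0 →
    ∀ f : A ⟶ B⟦k⟧, f = 0)

include hD hsemi hP hcross in
lemma goodvan (k : ℤ) (hk : k < 0) :
    ∀ A B, ExtClosure (fun X : C => ∃ i, P i X) A → ExtClosure (fun X : C => ∃ i, P i X) B →
      ∀ f : A ⟶ B⟦k⟧, f = 0 := by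
  refine extClosure_van₂ k ?_
  rintro A B ⟨i, hA⟩ ⟨j, hB⟩ f
  rcases lt_trichotomy i j with hij | rfl | hij
  · exact hsemi i j hij _ _ ((hP i).subset A hA) ((hD j).shift _ k ((hP j).subset B hB)) f
  · exact (hP i).hom_neg A B k hA hB hk f
  · exact hcross j i hij A B k hA hB (le_of_lt hk) f

include hcross in
lemma crossvan (i : Fin N) (B : C) (hB : P i B) (c : ℕ) (hc : c ≤ (i : ℕ)) (k : ℤ) (hk : k ≤ 0) :
    ∀ A, Lp P c A → ∀ f : B ⟶ A⟦k⟧, f = 0 := by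
  refine extClosure_van_right B k ?_
  rintro A ⟨j, hj, hA⟩ f
  exact hcross j i (by omega) B A k hB hA hk f

include hD hsemi hP in
lemma semivan (c : ℕ) (i' : Fin N) (hc : c ≤ (i' : ℕ)) (V : C) (hV : D i' V) :
    ∀ A, Lp P c A → ∀ f : A ⟶ V, f = 0 := by
  refine extClosure_van_left V ?_
  rintro A ⟨j, hj, hA⟩ f
  exact hsemi j i' (by omega) A V ((hP j).subset A hA) hV f

end Main

lemma filt_to_tower {Pp : C → Prop} {N' : ℕ} (obj : Fin (N'+1) → C) (n : Fin N' → ℤ)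
    (hz : IsZero (obj 0)) (hsa : StrictAnti n)
    (hsteps : ∀ i : Fin N', ∃ (f : obj i.castSucc ⟶ obj i.succ) (Z : C)
      (g : obj i.succ ⟶ Z) (h : Z ⟶ (obj i.castSucc)⟦(1 : ℤ)⟧),
      (Triangle.mk f g h ∈ distTriang C) ∧ ∃ A : C, Pp A ∧ Nonempty (Z ≅ A⟦n i⟧)) :
    ∀ (k : ℕ) (hk : k ≤ N') (b : ℤ), (∀ i : Fin N', (i:ℕ) < k → b ≤ n i) →
      Tower (fun _ A => Pp A) b (obj ⟨k, by omega⟩) := by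
  intro k
  induction k with
  | zero => intro _ b _; exact Tower.zero b hz
  | succ k ih =>
    intro hk b hb
    set i : Fin N' := ⟨k, by omega⟩ with hi
    obtain ⟨f, Z, g, h, hdist, A, hPA, ⟨e⟩⟩ := hsteps i
    have hsub : Tower (fun _ A => Pp A) (n i + 1) (obj ⟨k, by omega⟩) := by
      refine ih (by omega) (n i + 1) ?_
      intro i' hi'
      have : n i < n i' := hsa (show i' < i from hi')
      omega
    have hsub' : Tower (fun _ A => Pp A) (n i + 1) (obj i.castSucc) := hsub
    have hd := dist_iso₃ e f g h hdist
    exact Tower.step (hb i (Nat.lt_succ_self k)) hsub' _ _ _ hd hPA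

section Glue

variable {N : ℕ} {D : Fin N → C → Prop} (hD : ∀ i, IsTriangulatedSub (D i))
  (hsemi : ∀ i j : Fin N, i < j → ∀ (X Y : C), D i X → D j Y → ∀ f : X ⟶ Y, f = 0)
  {P : Fin N → C → Prop}
  (hP : ∀ i, IsHeartOn (D i) (P i))
  (hcross : ∀ i j : Fin N, i < j → ∀ (A B : C) (k : ℤ), P j A → P i B → k ≤ 0 →
    ∀ f : A ⟶ B⟦k⟧, f = 0)

include hD hsemi hP hcross in
lemma glue_full (i : Fin N) :
    ∀ {bz : ℤ} {Z : C}, Tower (fun _ A => P i A) bz Z →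
    ∀ {P₀ : C} {b₀ : ℤ}, Tower (fun _ A => Lp P (i : ℕ) A) b₀ P₀ →
    (∀ (s : ℤ) (V : C), D i V → ∀ f : P₀⟦s⟧ ⟶ V, f = 0) →
    ∀ {X : C} (f : P₀ ⟶ X) (g : X ⟶ Z) (δ : Z ⟶ P₀⟦(1:ℤ)⟧),
      (Triangle.mk f g δ ∈ distTriang C) →
      Tower (fun m A => Lp P (i : ℕ) A ∨ (bz ≤ m ∧ Lp P ((i : ℕ)+1) A)) (min b₀ bz) X := by
  intro bz Z hZ
  induction hZ with
  | zero bz h0 =>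
    intro P₀ b₀ hPt horth X f g δ hT
    have : IsIso f := Triangle.isZero₃_iff_isIso₁ _ hT |>.mp h0
    refine tower_iso (asIso f) ?_
    exact tower_mono_pred (fun m A h => Or.inl h)
      (tower_mono_bound (min_le_left _ _) hPt)
  | @step Z' Z Bp m bz hbz hsub j q κ hTz hBp ih =>
    intro P₀ b₀ hPt horth X f g δ hT
    -- the partial gluing Y
    obtain ⟨Y, p₁, r₁, hTa⟩ := distinguished_cocone_triangle₂ (j ≫ δ)
    obtain ⟨y, sqy1, sqy2⟩ : ∃ y : Y ⟶ X, p₁ ≫ y = 𝟙 P₀ ≫ f ∧ r₁ ≫ j = y ≫ g :=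
      complete_distinguished_triangle_morphism₂ (Triangle.mk p₁ r₁ (j ≫ δ))
        (Triangle.mk f g δ) hTa hT (𝟙 P₀) j (by simp [Triangle.mk])
    rw [Category.id_comp] at sqy1
    have hTY := ih hPt horth p₁ r₁ (j ≫ δ) hTa
    -- D i memberships
    have hZ'D : D i Z' := tower_sub (hD i) (fun _ A h => (hP i).subset A h) hsub
    have hBpD : D i (Bp⟦(m:ℤ)⟧) := (hD i).shift _ _ ((hP i).subset _ hBp)
    have hZD : D i Z := (hD i).ext _ hTz hZ'D hBpD
    -- splice
    obtain ⟨g', h', hdY⟩ := splice_lemma hTa hT hTz sqy1 sqy2.symm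
      (fun f => horth 1 _ hBpD f) (fun f => horth 1 _ hZD f)
      (by
        refine tower_hom_into hsub _ 1 ?_
        intro m' A' hq hm' f
        refine hom_zero_of_shift (k := m - (m' + 1))
          (goodvan hD hsemi hP hcross (m - (m'+1)) (by omega) A' Bp
            (ExtClosure.of ⟨i, hq⟩) (ExtClosure.of ⟨i, hBp⟩))
          (shAdd' A' m' 1 (m'+1) rfl) (Iso.refl _) (by omega) f)
    -- insert Bp⟦m⟧ into the tower of Y
    have hTY' : Tower (fun m' A => Lp P (i:ℕ) A ∨ (m+1 ≤ m' ∧ Lp P ((i:ℕ)+1) A))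
        (min b₀ bz) Y := tower_mono_bound (min_le_min (le_refl b₀) (by omega)) hTY
    have hins := insert_lemma m Bp
      (Q := fun m' A => Lp P (i:ℕ) A ∨ (m+1 ≤ m' ∧ Lp P ((i:ℕ)+1) A))
      (Q' := fun m' A => Lp P (i:ℕ) A ∨ (m ≤ m' ∧ Lp P ((i:ℕ)+1) A))
      (fun m' A h => h.elim Or.inl (fun ⟨h1, h2⟩ => Or.inr ⟨by omega, h2⟩))
      (Or.inr ⟨le_rfl, ExtClosure.of ⟨i, by omega, hBp⟩⟩)
      (by
        rintro A V hA ⟨f₀, g₀, h₀, hd₀⟩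
        have hA' : Lp P (i:ℕ) A := by
          rcases hA with h | ⟨h1, _⟩
          · exact h
          · omega
        refine Or.inr ⟨le_rfl, ?_⟩
        have hd₀' := shift_triangle_dist _ hd₀ (-m)
        refine ExtClosure.ext _ hd₀' ?_ ?_
        · exact ExtClosure.iso
            (show A ≅ ((A⟦(m:ℤ)⟧)⟦(-m:ℤ)⟧) from
              shZero A ≪≫ (shAdd' A m (-m) 0 (by omega)).symm)
            (lp_mono P (by omega) A hA')
        · exact ExtClosure.iso
            (show Bp ≅ ((Bp⟦(m:ℤ)⟧)⟦(-m:ℤ)⟧) from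
              shZero Bp ≪≫ (shAdd' Bp m (-m) 0 (by omega)).symm)
            (ExtClosure.of ⟨i, by omega, hBp⟩))
      (by
        -- hlow
        intro m' A hA hm' s t U V' eU eV' f
        have hA' : Lp P (i:ℕ) A := by
          rcases hA with h | ⟨h1, _⟩
          · exact h
          · omega
        refine hom_zero_of_shift_left (DD := D i) (fun V n h => (hD i).shift V n h)
          (fun V hV f => semivan hD hsemi hP (i:ℕ) i le_rfl V hV A hA' f)
          (eU ≪≫ shAdd' A m' s (m'+s) rfl) ?_ f
        exact (hD i).iso eV'.symm ((hD i).shift _ _ hBpD)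
        )
      (by
        -- hneg
        intro p q' A A' hA hA' s t U V' eU eV' hlt f
        have hGA : ExtClosure (fun X : C => ∃ i, P i X) A := by
          rcases hA with h | ⟨_, rfl⟩
          · rcases h with h | ⟨_, h⟩
            · exact lp_sub_G P _ _ h
            · exact lp_sub_G P _ _ h
          · exact ExtClosure.of ⟨i, hBp⟩
        have hGA' : ExtClosure (fun X : C => ∃ i, P i X) A' := by
          rcases hA' with h | ⟨_, rfl⟩
          · rcases h with h | ⟨_, h⟩
            · exact lp_sub_G P _ _ h
            · exact lp_sub_G P _ _ h
          · exact ExtClosure.of ⟨i, hBp⟩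
        exact hom_zero_of_shift (k := (q'+t) - (p+s))
          (goodvan hD hsemi hP hcross _ (by omega) A A' hGA hGA')
          (eU ≪≫ shAdd' A p s (p+s) rfl) (eV' ≪≫ shAdd' A' q' t (q'+t) rfl) (by omega) f)
      (by
        -- hBAor
        intro m' A hA hm' f
        have hA' : Lp P (i:ℕ) A := by
          rcases hA with h | ⟨h1, _⟩
          · exact h
          · omega
        exact hom_zero_of_shift (k := m' - (m - 1))
          (crossvan hcross i Bp hBp (i:ℕ) le_rfl (m' - (m-1)) (by omega) A hA')
          (shAdd' Bp m (-1) (m-1) (by omega)) (Iso.refl _) (by omega) f)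
      hTY' (by
        have : min b₀ bz ≤ bz := min_le_right _ _
        omega) y g' h' hdY
    refine tower_mono_pred ?_ hins
    rintro m' A (h | ⟨h1, h2⟩)
    · exact Or.inl h
    · exact Or.inr ⟨by omega, h2⟩

end Glue

end Aux2

/-- Given a semiorthogonal decomposition `D = ⟨D_N, …, D₂, D₁⟩` and hearts `C_i ⊆ D_i`
of bounded t-structures with `Hom^{≤0}(C_j, C_i) = 0` for `j > i`, the extension
closure `⟨C_1, …, C_N⟩_ex` is the heart of a bounded t-structure on `D`. -/
theorem stmt_9 {N : ℕ} (D : Fin N → C → Prop)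
    (hD : ∀ i, IsTriangulatedSub (D i))
    (hsemi : ∀ i j : Fin N, i < j → ∀ (X Y : C), D i X → D j Y → ∀ f : X ⟶ Y, f = 0)
    (hSOD : ∀ X : C, ∃ obj : Fin (N + 1) → C,
      IsZero (obj 0) ∧ Nonempty (obj (Fin.last N) ≅ X) ∧
      ∀ i : Fin N, ∃ (f : obj i.castSucc ⟶ obj i.succ) (Z : C)
        (g : obj i.succ ⟶ Z) (h : Z ⟶ (obj i.castSucc)⟦(1 : ℤ)⟧),
        (Triangle.mk f g h ∈ distTriang C) ∧ D i Z)
    (P : Fin N → C → Prop)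
    (hP : ∀ i, IsHeartOn (D i) (P i))
    (hcross : ∀ i j : Fin N, i < j → ∀ (A B : C) (k : ℤ), P j A → P i B → k ≤ 0 →
      ∀ f : A ⟶ B⟦k⟧, f = 0) :
    IsHeartOn (fun _ : C => True) (ExtClosure fun X : C => ∃ i, P i X) := by

  constructor
  · intro X _; trivial
  · intro A B k hA hB hk f
    exact goodvan hD hsemi hP hcross k hk A B hA hB f
  · intro X _
    obtain ⟨obj, hz, ⟨etop⟩, hsteps⟩ := hSOD X
    have outer : ∀ (k : Fin (N+1)),
        (∃ b, Tower (fun _ A => Lp P (k : ℕ) A) b (obj k)) ∧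
        (∀ (s : ℤ) (i' : Fin N), (k : ℕ) ≤ (i' : ℕ) → ∀ V, D i' V →
          ∀ ff : (obj k)⟦s⟧ ⟶ V, ff = 0) := by
      intro k
      induction k using Fin.induction with
      | zero =>
        constructor
        · exact ⟨0, Tower.zero 0 hz⟩
        · intro s i' _ V hV ff
          exact ((shiftFunctor C s).map_isZero hz).eq_of_src ff 0
      | succ i ih =>
        obtain ⟨⟨b₀, hPt⟩, horth⟩ := ih
        have hvs : ((i.succ : Fin (N+1)) : ℕ) = (i:ℕ)+1 := Fin.val_succ i
        have hvc : ((i.castSucc : Fin (N+1)) : ℕ) = (i:ℕ) := Fin.coe_castSucc i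
        obtain ⟨f, Z, g₀, h₀, hdist, hZD⟩ := hsteps i
        obtain ⟨N', obj', n', hz', ⟨e'⟩, hsa', hsteps'⟩ := (hP i).filt Z hZD
        obtain ⟨bZ, hbZ⟩ : ∃ bZ : ℤ, ∀ i2 : Fin N', (i2:ℕ) < N' → bZ ≤ n' i2 := by
          rcases Nat.eq_zero_or_pos N' with h0 | h0
          · exact ⟨0, fun i2 _ => absurd i2.2 (by omega)⟩
          · refine ⟨n' ⟨N'-1, by omega⟩, fun i2 _ => ?_⟩
            refine hsa'.antitone ?_
            have := i2.2
            exact Fin.le_def.mpr (by simp; omega)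
        have ZT0 : Tower (fun _ A => P i A) bZ (obj' ⟨N', by omega⟩) :=
          filt_to_tower obj' n' hz' hsa' hsteps' N' le_rfl bZ hbZ
        have ZT : Tower (fun _ A => P i A) bZ Z := tower_iso e' ZT0
        have glueT := glue_full hD hsemi hP hcross i ZT hPt
          (fun s V hV ff => horth s i le_rfl V hV ff) f g₀ h₀ hdist
        constructor
        · refine ⟨min b₀ bZ, tower_mono_pred ?_ glueT⟩
          rintro m A (h | ⟨_, h⟩)
          · exact lp_mono P (by omega) A h
          · exact h
        · intro s i' hi' V hV ff
          have hii' : (i : ℕ) + 1 ≤ (i' : ℕ) := by simpa using hi'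
          have hTk := shift_triangle_dist _ hdist s
          have h1 : ((Triangle.shiftFunctor C s).obj (Triangle.mk f g₀ h₀)).mor₁ ≫ ff = 0 :=
            horth s i' (by omega) V hV _
          obtain ⟨e, he⟩ := Triangle.yoneda_exact₂ _ hTk ff h1
          have he0 : e = 0 :=
            hsemi i i' (Fin.lt_def.mpr (by omega)) _ _ ((hD i).shift Z s hZD) hV e
          rw [he, he0, comp_zero]; rfl
    obtain ⟨⟨b, hT⟩, _⟩ := outer (Fin.last N)
    have hTX : Tower (fun _ A => Lp P N A) b X := tower_iso etop hT
    obtain ⟨N₀, obj₀, n₀, hz₀, htop₀, hsa₀, hbd₀, hsteps₀⟩ := tower_to_filt hTX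
    refine ⟨N₀, obj₀, n₀, hz₀, htop₀, hsa₀, ?_⟩
    intro i0
    obtain ⟨f, Zz, g, h, hd, A, m, hQ, hZ, hn⟩ := hsteps₀ i0
    exact ⟨f, Zz, g, h, hd, A, lp_sub_G P N A hQ, ⟨eqToIso (by rw [hZ, hn])⟩⟩
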